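/- Let A and A' be adjacency matrices (on the same vertex set of size v) of two strongly regular graphs, each with parameters (v,k,λ,μ), such that A + A' is a 0-1 matrix and μ = λ + 1. Then every pair of distinct vertices is contained in either 2μ - 1 or 2μ of the blocks formed by the neighborhoods in the two graphs (i.e., supports of rows of A together with supports of rows of A'). -/

import Mathlib

lemma card_common {V : Type*} [Fintype V] [DecidableEq V]
    (G : SimpleGraph V) [DecidableRel G.Adj] (x y : V) :
    (Finset.univ.filter fun z => G.Adj z x ∧ G.Adj z y).card =
      Fintype.card (G.commonNeighbors x y) := by
  rw [← Set.toFinset_card]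
  congr 1
  ext z
  simp [SimpleGraph.mem_commonNeighbors, SimpleGraph.adj_comm]

/-- If `A`, `A'` are adjacency matrices of two edge-disjoint strongly
regular graphs on the same vertex set, both with parameters `(v,k,λ,μ)` and `μ = λ+1`,
then every pair of distinct vertices is contained in either `2μ-1` or `2μ` of the blocks
formed by the neighborhoods in the two graphs. -/
theorem stmt_14 {V : Type*} [Fintype V] [DecidableEq V]
    (G G' : SimpleGraph V) [DecidableRel G.Adj] [DecidableRel G'.Adj]
    (v k l m : ℕ) (h : G.IsSRGWith v k l m) (h' : G'.IsSRGWith v k l m)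
    (hm : m = l + 1)
    (hdisj : ∀ x y : V, ¬(G.Adj x y ∧ G'.Adj x y)) :
    ∀ x y : V, x ≠ y →
      (Finset.univ.filter fun z => G.Adj z x ∧ G.Adj z y).card +
        (Finset.univ.filter fun z => G'.Adj z x ∧ G'.Adj z y).card = 2 * m - 1 ∨
      (Finset.univ.filter fun z => G.Adj z x ∧ G.Adj z y).card +
        (Finset.univ.filter fun z => G'.Adj z x ∧ G'.Adj z y).card = 2 * m := by
  intro x y hxy
  rw [card_common, card_common]
  by_cases hG : G.Adj x y
  · left
    have hG' : ¬G'.Adj x y := fun hG' => hdisj x y ⟨hG, hG'⟩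
    rw [h.of_adj x y hG, h'.of_not_adj hxy hG']
    omega
  · by_cases hG' : G'.Adj x y
    · left
      rw [h.of_not_adj hxy hG, h'.of_adj x y hG']
      omega
    · right
      rw [h.of_not_adj hxy hG, h'.of_not_adj hxy hG']
      omega
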